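/- Let A⁺, A⁻ : ℝ → ℝ and u⁺, u⁻, û, c ∈ ℝ. Assume the Rankine–Hugoniot condition A⁺(u⁺) = A⁻(u⁻) and that the Kruzkov entropy inequality holds at c. Then: (i) if u⁺ ≤ u⁻ < c < û, then A⁺(c) ≤ A⁻(c); (ii) if u⁺ < c < u⁻ ≤ û, then A⁺(c) ≤ A⁺(u⁺). -/
import Mathlib


open MeasureTheory Filter Set

/-- The Kruzkov entropy inequality at `c` for data `(um, up, uh)`:
`A⁺(u⁺)·sign(u⁺−c) − 2·sign(u⁺−û)·A⁺(c)·𝟙_{(û,u⁺)}(c) ≤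
 A⁻(u⁻)·sign(u⁻−c) − 2·sign(u⁻−û)·A⁻(c)·𝟙_{(û,u⁻)}(c)`. -/
def KruzkovIneq (Ap Am : ℝ → ℝ) (um up uh c : ℝ) : Prop :=
  Ap up * Real.sign (up - c) -
      2 * Real.sign (up - uh) * Ap c * Set.indicator (Set.uIoo uh up) (1 : ℝ → ℝ) c
    ≤ Am um * Real.sign (um - c) -
      2 * Real.sign (um - uh) * Am c * Set.indicator (Set.uIoo uh um) (1 : ℝ → ℝ) c

theorem stmt_9 (Ap Am : ℝ → ℝ) (up um uh c : ℝ)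
    (hRH : Ap up = Am um)
    (hkruz : KruzkovIneq Ap Am um up uh c) :
    (up ≤ um → um < c → c < uh → Ap c ≤ Am c) ∧
    (up < c → c < um → um ≤ uh → Ap c ≤ Ap up) := by
  unfold KruzkovIneq at hkruz
  constructor
  · intro h1 h2 h3
    rw [Real.sign_of_neg (by linarith : up - c < 0),
        Real.sign_of_neg (by linarith : um - c < 0),
        Real.sign_of_neg (by linarith : up - uh < 0),
        Real.sign_of_neg (by linarith : um - uh < 0),
        Set.indicator_of_mem (by
          simp only [Set.uIoo, Set.mem_Ioo, lt_inf_iff, inf_lt_iff, lt_sup_iff, sup_lt_iff]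
          constructor
          · right; linarith
          · left; linarith), Set.indicator_of_mem (by
          simp only [Set.uIoo, Set.mem_Ioo, lt_inf_iff, inf_lt_iff, lt_sup_iff, sup_lt_iff]
          constructor
          · right; linarith
          · left; linarith)] at hkruz
    simp only [Pi.one_apply] at hkruz
    linarith
  · intro h1 h2 h3
    rw [Real.sign_of_neg (by linarith : up - c < 0),
        Real.sign_of_pos (by linarith : 0 < um - c),
        Real.sign_of_neg (by linarith : up - uh < 0),
        Set.indicator_of_mem (by
          simp only [Set.uIoo, Set.mem_Ioo, lt_inf_iff, inf_lt_iff, lt_sup_iff, sup_lt_iff]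
          constructor
          · right; linarith
          · left; linarith),
        Set.indicator_of_notMem (by
          simp only [Set.uIoo, Set.mem_Ioo, lt_inf_iff, inf_lt_iff, lt_sup_iff, sup_lt_iff]
          intro h
          rcases h.1 with h' | h' <;> linarith)] at hkruz
    simp only [Pi.one_apply, mul_zero] at hkruz
    linarith
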